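/- Let G be a finite undirected multigraph, let s, t ∈ V(G) with s ≠ t, let Z ⊆ E(G), and let λ* be a positive integer. Then Z admits a λ*-flow-augmenting multiset of vertex pairs compatible with Z if and only if Z does not contain an (s,t)-cut of cardinality less than λ*. -/

import Mathlib

/-!
A finite undirected multigraph (parallel edges allowed, no loops) is modelled by a
vertex type `V`, an edge type `E` (both finite) and an endpoint map `ends : E → Sym2 V`
such that no edge is a loop (`¬ (ends e).IsDiag`).
-/

namespace FlowAug

variable {V E : Type}

/-- Two vertices are adjacent in `G - X` if some edge outside `X` joins them. -/
def Adj (ends : E → Sym2 V) (X : Set E) (u v : V) : Prop :=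
  ∃ e, e ∉ X ∧ ends e = s(u, v)

/-- Reachability in `G - X`. -/
def Reach (ends : E → Sym2 V) (X : Set E) : V → V → Prop :=
  Relation.ReflTransGen (Adj ends X)

/-- `R_S(X)` : the set of vertices reachable from the vertex set `S` in `G - X`. -/
def RS (ends : E → Sym2 V) (X : Set E) (S : Set V) : Set V :=
  {v | ∃ u ∈ S, Reach ends X u v}

/-- `δ(S)` : the set of edges with exactly one endpoint in `S`. -/
def edgeBoundary (ends : E → Sym2 V) (S : Set V) : Set E :=
  {e | ∃ u v, ends e = s(u, v) ∧ u ∈ S ∧ v ∉ S}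

/-- `X` is an `(S,T)`-cut. -/
def IsCut (ends : E → Sym2 V) (X : Set E) (S T : Set V) : Prop :=
  RS ends X S ∩ RS ends X T = ∅

/-- `X` is a minimal `(S,T)`-cut: no proper subset of `X` is an `(S,T)`-cut. -/
def IsMinimalCut (ends : E → Sym2 V) (X : Set E) (S T : Set V) : Prop :=
  IsCut ends X S T ∧ ∀ Y : Set E, Y ⊂ X → ¬ IsCut ends Y S T

/-- `X` is an `(S,T)`-cut of minimum cardinality. -/
def IsMinimumCut (ends : E → Sym2 V) (X : Set E) (S T : Set V) : Prop :=
  IsCut ends X S T ∧ ∀ Y : Set E, IsCut ends Y S T → X.ncard ≤ Y.ncard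

/-- `X` is an `(S,T)`-cut that is closest to `S`: every `(S,T)`-cut `X' ≠ X` with
`R_S(X') ⊆ R_S(X)` satisfies `|X'| > |X|`. -/
def IsClosestCut (ends : E → Sym2 V) (X : Set E) (S T : Set V) : Prop :=
  IsCut ends X S T ∧
    ∀ X' : Set E, IsCut ends X' S T → X' ≠ X →
      RS ends X' S ⊆ RS ends X S → X.ncard < X'.ncard

/-- `λ_G(s,t)` : the minimum cardinality of an `(s,t)`-cut (equivalently, by Menger's
theorem, the maximum number of pairwise edge-disjoint `(s,t)`-paths). -/
noncomputable def lamCut (ends : E → Sym2 V) (s t : V) : ℕ :=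
  sInf {n | ∃ X : Set E, IsCut ends X {s} {t} ∧ X.ncard = n}

/-- `Z_{s,t}` : the edges of `Z` with one endpoint in `R_s(Z)` and one in `R_t(Z)`. -/
def Zst (ends : E → Sym2 V) (s t : V) (Z : Set E) : Set E :=
  {e | e ∈ Z ∧ ∃ u v, ends e = s(u, v) ∧ u ∈ RS ends Z {s} ∧ v ∈ RS ends Z {t}}

/-- `Z` is a special `(s,t)`-cut: `Z` is an `(s,t)`-cut and `Z_{s,t}` is an `(s,t)`-cut. -/
def IsSpecial (ends : E → Sym2 V) (s t : V) (Z : Set E) : Prop :=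
  IsCut ends Z {s} {t} ∧ IsCut ends (Zst ends s t Z) {s} {t}

/-- `Z` is eligible for `(s,t)`: special, and every edge of `Z` has its endpoints in
different connected components of `G - Z`. -/
def IsEligible (ends : E → Sym2 V) (s t : V) (Z : Set E) : Prop :=
  IsSpecial ends s t Z ∧ ∀ e ∈ Z, ∀ u v : V, ends e = s(u, v) → ¬ Reach ends Z u v

/-- `Z` is a star `(s,t)`-cut: an `(s,t)`-cut each of whose edges has exactly one
endpoint in `R_s(Z)`. -/
def IsStarCut (ends : E → Sym2 V) (s t : V) (Z : Set E) : Prop :=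
  IsCut ends Z {s} {t} ∧
    ∀ e ∈ Z, ∃ u v : V, ends e = s(u, v) ∧ u ∈ RS ends Z {s} ∧ v ∉ RS ends Z {s}

/-- A path from `s` to `t` in the multigraph described by `ends`, given by its
sequence of vertices and traversed edges. -/
structure MGPath (V E : Type) (ends : E → Sym2 V) (s t : V) where
  n : ℕ
  vert : Fin (n + 1) → V
  edge : Fin n → E
  vert_zero : vert 0 = s
  vert_last : vert (Fin.last n) = t
  ends_eq : ∀ i : Fin n, ends (edge i) = s(vert i.castSucc, vert i.succ)

/-- A family of paths is (pairwise) edge-disjoint: no edge is used twice, neither on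
a single path nor on two different paths. -/
def EdgeDisjoint {ends : E → Sym2 V} {s t : V} {k : ℕ}
    (P : Fin k → MGPath V E ends s t) : Prop :=
  Function.Injective fun p : (Σ i : Fin k, Fin (P i).n) => (P p.1).edge p.2

/-- `P` is a witnessing `(s,t)`-flow for `Z`: a family of `λ_G(s,t)` pairwise
edge-disjoint `(s,t)`-paths such that every edge of `Z_{s,t}` occurs on a path of `P`
and every path of `P` contains exactly one edge of `Z`. -/
def IsWitnessingFlow (ends : E → Sym2 V) (s t : V) (Z : Set E) {k : ℕ}
    (P : Fin k → MGPath V E ends s t) : Prop :=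
  k = lamCut ends s t ∧ EdgeDisjoint P ∧
    (∀ e ∈ Zst ends s t Z, ∃ (i : Fin k) (j : Fin (P i).n), (P i).edge j = e) ∧
    ∀ i : Fin k, ∃! j : Fin (P i).n, (P i).edge j ∈ Z

/-- The vertices occurring on the paths of a family `P`. -/
def pathVerts {ends : E → Sym2 V} {s t : V} {k : ℕ}
    (P : Fin k → MGPath V E ends s t) : Set V :=
  {v | ∃ (i : Fin k) (m : Fin ((P i).n + 1)), (P i).vert m = v}

/-- The edges occurring on the paths of a family `P`. -/
def pathEdges {ends : E → Sym2 V} {s t : V} {k : ℕ}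
    (P : Fin k → MGPath V E ends s t) : Set E :=
  {e | ∃ (i : Fin k) (j : Fin (P i).n), (P i).edge j = e}

/-- The arcs obtained by orienting every edge of every path of `P` in the forward
direction (from `s` towards `t`). -/
def DirAdjOnFlow {ends : E → Sym2 V} {s t : V} {k : ℕ}
    (P : Fin k → MGPath V E ends s t) (u v : V) : Prop :=
  ∃ (i : Fin k) (l : Fin (P i).n), (P i).vert l.castSucc = u ∧ (P i).vert l.succ = v

/-- `N[S]` : the closed neighborhood of `S`. -/
def closedNbhd (ends : E → Sym2 V) (S : Set V) : Set V :=
  S ∪ {v | ∃ u ∈ S, ∃ e : E, ends e = s(u, v)}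

/-- `X` is the minimum `(s,t)`-cut closest to `s` among all minimum `(s,t)`-cuts
satisfying the property `P`. -/
def IsClosestMinCutAmong (ends : E → Sym2 V) (s t : V) (P : Set E → Prop)
    (X : Set E) : Prop :=
  IsMinimumCut ends X {s} {t} ∧ P X ∧
    ∀ Y : Set E, IsMinimumCut ends Y {s} {t} → P Y → Y ≠ X →
      RS ends Y {s} ⊆ RS ends X {s} → X.ncard < Y.ncard

/-- `C 0, …, C p` is the canonical sequence of non-crossing minimum `(s,t)`-cuts:
`C 0` is the unique minimum `(s,t)`-cut closest to `s`; `C i` is the unique minimum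
`(s,t)`-cut closest to `s` among all minimum `(s,t)`-cuts `X` with
`N[R_s(C (i-1))] ⊆ R_s(X)`; and `p` is the largest index for which such a cut exists. -/
def CanonSeq (ends : E → Sym2 V) (s t : V) (p : ℕ) (C : ℕ → Set E) : Prop :=
  IsClosestMinCutAmong ends s t (fun _ => True) (C 0) ∧
    (∀ i : ℕ, 0 < i → i ≤ p →
      IsClosestMinCutAmong ends s t
        (fun X => closedNbhd ends (RS ends (C (i - 1)) {s}) ⊆ RS ends X {s}) (C i)) ∧
    ¬ ∃ X : Set E, IsMinimumCut ends X {s} {t} ∧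
        closedNbhd ends (RS ends (C p) {s}) ⊆ RS ends X {s}

/-- The blocks `V_0, …, V_{p+1}` associated with the canonical sequence of cuts. -/
def blockOf (ends : E → Sym2 V) (s : V) (p : ℕ) (C : ℕ → Set E) (i : ℕ) : Set V :=
  if i = 0 then RS ends (C 0) {s}
  else if i ≤ p then RS ends (C i) {s} \ RS ends (C (i - 1)) {s}
  else Set.univ \ RS ends (C p) {s}

/-- Adjacency inside the induced subgraph `G[B]`. -/
def AdjIn (ends : E → Sym2 V) (B : Set V) (u v : V) : Prop :=
  u ∈ B ∧ v ∈ B ∧ ∃ e : E, ends e = s(u, v)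

/-- Reachability inside the induced subgraph `G[B]`. -/
def ReachIn (ends : E → Sym2 V) (B : Set V) : V → V → Prop :=
  Relation.ReflTransGen (AdjIn ends B)

/-- The induced subgraph `G[B]` is connected. -/
def ConnIn (ends : E → Sym2 V) (B : Set V) : Prop :=
  ∀ u ∈ B, ∀ v ∈ B, ReachIn ends B u v

/-- The connected component of `u` in the induced subgraph `G[B]`. -/
def compIn (ends : E → Sym2 V) (B : Set V) (u : V) : Set V :=
  {v | v ∈ B ∧ ReachIn ends B u v}

/-- The set of connected components of the induced subgraph `G[B]`. -/
def componentsIn (ends : E → Sym2 V) (B : Set V) : Set (Set V) :=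
  {K | ∃ u ∈ B, K = compIn ends B u}

/-- The union of the blocks `V_a, …, V_b`. -/
def unionBlocks (ends : E → Sym2 V) (s : V) (p : ℕ) (C : ℕ → Set E)
    (a b : ℕ) : Set V :=
  ⋃ j ∈ Set.Icc a b, blockOf ends s p C j

/-- `st` encodes the decomposition of the blocks `V_0, …, V_{p+1}` into bundles
`W_0, …, W_{q+1}`: bundle `W_i` consists of the blocks `V_{st i}, …, V_{st (i+1) - 1}`.
`W_0 = V_0`, and each further bundle is greedily either a single connected block, or a
maximal union of contiguous blocks inducing a disconnected subgraph. -/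
def IsBundleSeq (ends : E → Sym2 V) (s : V) (p : ℕ) (C : ℕ → Set E)
    (q : ℕ) (st : ℕ → ℕ) : Prop :=
  st 0 = 0 ∧ st 1 = 1 ∧ st (q + 2) = p + 2 ∧
    (∀ i j : ℕ, i < j → j ≤ q + 2 → st i < st j) ∧
    ∀ i : ℕ, 1 ≤ i → i ≤ q + 1 →
      (st (i + 1) = st i + 1 ∧ ConnIn ends (blockOf ends s p C (st i))) ∨
      (¬ ConnIn ends (blockOf ends s p C (st i)) ∧
        ¬ ConnIn ends (unionBlocks ends s p C (st i) (st (i + 1) - 1)) ∧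
        ∀ j : ℕ, st (i + 1) - 1 < j → j ≤ p + 1 →
          ConnIn ends (unionBlocks ends s p C (st i) j))

/-- The bundle `W_i`. -/
def bundleOf (ends : E → Sym2 V) (s : V) (p : ℕ) (C : ℕ → Set E) (st : ℕ → ℕ)
    (i : ℕ) : Set V :=
  unionBlocks ends s p C (st i) (st (i + 1) - 1)

/-- `C'_i` : the cut (among `C_0, …, C_p`) separating bundle `W_i` from `W_{i+1}`. -/
def interCut (C : ℕ → Set E) (st : ℕ → ℕ) (i : ℕ) : Set E :=
  C (st (i + 1) - 1)

/-- A bundle `W` is unaffected by `Z` if `N[W]` is contained in a single connected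
component of `G - Z`. -/
def Unaffected (ends : E → Sym2 V) (Z : Set E) (W : Set V) : Prop :=
  ∀ u ∈ closedNbhd ends W, ∀ v ∈ closedNbhd ends W, Reach ends Z u v

/-- The stretch `W_{a,b} = W_a ∪ ⋯ ∪ W_b` of bundles. -/
def stretchSet (ends : E → Sym2 V) (s : V) (p : ℕ) (C : ℕ → Set E) (st : ℕ → ℕ)
    (a b : ℕ) : Set V :=
  ⋃ i ∈ Set.Icc a b, bundleOf ends s p C st i

/-- The left interface of a stretch starting at bundle `W_a`. -/
def leftInterface (ends : E → Sym2 V) (s : V) (p : ℕ) (C : ℕ → Set E) (st : ℕ → ℕ)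
    (a : ℕ) : Set V :=
  if a = 0 then {s}
  else {v | v ∈ bundleOf ends s p C st a ∧ ∃ e ∈ interCut C st (a - 1), v ∈ ends e}

/-- The right interface of a stretch ending at bundle `W_b`. -/
def rightInterface (ends : E → Sym2 V) (s t : V) (p : ℕ) (C : ℕ → Set E)
    (st : ℕ → ℕ) (q b : ℕ) : Set V :=
  if b = q + 1 then {t}
  else {v | v ∈ bundleOf ends s p C st b ∧ ∃ e ∈ interCut C st b, v ∈ ends e}

/-- `W_{a,b}` is a maximal stretch of bundles all affected by `Z`. -/
def MaxAffStretch (ends : E → Sym2 V) (s : V) (p : ℕ) (C : ℕ → Set E)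
    (st : ℕ → ℕ) (q : ℕ) (Z : Set E) (a b : ℕ) : Prop :=
  a ≤ b ∧ b ≤ q + 1 ∧
    (∀ i : ℕ, a ≤ i → i ≤ b → ¬ Unaffected ends Z (bundleOf ends s p C st i)) ∧
    (a = 0 ∨ Unaffected ends Z (bundleOf ends s p C st (a - 1))) ∧
    (b = q + 1 ∨ Unaffected ends Z (bundleOf ends s p C st (b + 1)))

/-- `W_{a,b}` is a maximal stretch of bundles affected by `Z` containing both a vertex
reachable from `s` and a vertex reachable from `t` in `G - Z`. -/
def StronglyAffStretch (ends : E → Sym2 V) (s t : V) (p : ℕ) (C : ℕ → Set E)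
    (st : ℕ → ℕ) (q : ℕ) (Z : Set E) (a b : ℕ) : Prop :=
  MaxAffStretch ends s p C st q Z a b ∧
    (stretchSet ends s p C st a b ∩ RS ends Z {s}).Nonempty ∧
    (stretchSet ends s p C st a b ∩ RS ends Z {t}).Nonempty

/-- Adjacency inside the induced subgraph `G[B]` avoiding the edge set `X`. -/
def AdjInX (ends : E → Sym2 V) (B : Set V) (X : Set E) (u v : V) : Prop :=
  u ∈ B ∧ v ∈ B ∧ ∃ e, e ∉ X ∧ ends e = s(u, v)

/-- Reachability inside `G[B] - X`. -/
def ReachInX (ends : E → Sym2 V) (B : Set V) (X : Set E) : V → V → Prop :=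
  Relation.ReflTransGen (AdjInX ends B X)

/-- `X` is a star `(a,b)`-cut of the induced subgraph `H = G[B]`: in `H - X` no path
connects `a` and `b`, and every edge of `X` has exactly one endpoint reachable from
`a` in `H - X`. -/
def IsStarCutIn (ends : E → Sym2 V) (B : Set V) (a b : V) (X : Set E) : Prop :=
  ¬ ReachInX ends B X a b ∧
    ∀ e ∈ X, ∃ u v : V, ends e = s(u, v) ∧
      ReachInX ends B X a u ∧ ¬ ReachInX ends B X a v

end FlowAug

namespace FlowAug

private lemma adj_symm' {V E : Type} {ends : E → Sym2 V} {X : Set E} {u v : V}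
    (h : Adj ends X u v) : Adj ends X v u := by
  obtain ⟨e, he, hee⟩ := h
  exact ⟨e, he, by rw [hee, Sym2.eq_swap]⟩

private lemma reach_symm' {V E : Type} {ends : E → Sym2 V} {X : Set E} {u v : V}
    (h : Reach ends X u v) : Reach ends X v u :=
  (@Relation.ReflTransGen.stdSymm _ (Adj ends X) ⟨fun _ _ h' => adj_symm' h'⟩).symm _ _ h

private lemma reach_mono' {V E : Type} {ends : E → Sym2 V} {X Y : Set E}
    (hXY : X ⊆ Y) {u v : V} (h : Reach ends Y u v) : Reach ends X u v :=
  Relation.ReflTransGen.mono (r := Adj ends Y) (p := Adj ends X)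
    (fun _ _ (h' : Adj ends Y _ _) => by
      obtain ⟨e, he, hee⟩ := h'
      exact ⟨e, fun hc => he (hXY hc), hee⟩) _ _ h

/-- An edge set `Z` admits a `λ*`-flow-augmenting multiset of vertex
pairs compatible with `Z` if and only if `Z` does not contain an `(s,t)`-cut of
cardinality less than `λ*`.  The multiset `A` is modelled as a family
`a : Fin m → Sym2 V` of vertex pairs; `G + A` is the multigraph with edge type
`E ⊕ Fin m` and endpoint map `Sum.elim ends a`. -/
theorem flowAugmenting_iff_no_small_cut_inside {V E : Type} [Fintype V] [Fintype E]
    (ends : E → Sym2 V) (hloop : ∀ e, ¬ (ends e).IsDiag)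
    (s t : V) (hst : s ≠ t)
    (Z : Set E) (lamStar : ℕ) (hpos : 0 < lamStar) :
    (∃ (m : ℕ) (a : Fin m → Sym2 V),
        (∀ (i : Fin m) (u v : V), a i = s(u, v) → Reach ends Z u v) ∧
        lamStar ≤ lamCut (Sum.elim ends a) s t) ↔
      ¬ ∃ C : Set E, C ⊆ Z ∧ IsCut ends C {s} {t} ∧ C.ncard < lamStar := by
  classical
  constructor
  · rintro ⟨m, a, hA, hlam⟩ ⟨C, hCZ, hCcut, hCcard⟩
    set X : Set (E ⊕ Fin m) := Sum.inl '' C with hXdef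
    have htrans : ∀ u v : V, Reach (Sum.elim ends a) X u v → Reach ends C u v := by
      intro u v h
      induction h with
      | refl => exact Relation.ReflTransGen.refl
      | tail _ hadj ih =>
        refine ih.trans ?_
        obtain ⟨ε, hεX, hεe⟩ := hadj
        cases ε with
        | inl e =>
          exact Relation.ReflTransGen.single
            ⟨e, fun hc => hεX ⟨e, hc, rfl⟩, hεe⟩
        | inr i =>
          exact reach_mono' hCZ (hA i _ _ hεe)
    have hXcut : IsCut (Sum.elim ends a) X {s} {t} := by
      rw [IsCut, Set.eq_empty_iff_forall_notMem]
      rintro w ⟨⟨u, hu, hru⟩, ⟨u', hu', hru'⟩⟩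
      rw [Set.mem_singleton_iff] at hu hu'
      rw [hu] at hru; rw [hu'] at hru'
      have hw : w ∈ RS ends C {s} ∩ RS ends C {t} :=
        ⟨⟨s, rfl, htrans _ _ hru⟩, ⟨t, rfl, htrans _ _ hru'⟩⟩
      rw [hCcut] at hw
      exact hw
    have h1 : lamCut (Sum.elim ends a) s t ≤ X.ncard :=
      Nat.sInf_le ⟨X, hXcut, rfl⟩
    have h2 : X.ncard = C.ncard := Set.ncard_image_of_injective _ Sum.inl_injective
    omega
  · intro hno
    set ι := Fin lamStar × V × V with hι
    set m := Fintype.card ι with hm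
    set g : ι ≃ Fin m := Fintype.equivFin ι with hg
    set a : Fin m → Sym2 V := fun i =>
      if Reach ends Z (g.symm i).2.1 (g.symm i).2.2
        then s((g.symm i).2.1, (g.symm i).2.2)
        else s((g.symm i).2.1, (g.symm i).2.1) with ha
    refine ⟨m, a, ?_, ?_⟩
    · intro i u v hi
      rw [ha] at hi
      simp only at hi
      split_ifs at hi with hr
      · rw [Sym2.eq_iff] at hi
        rcases hi with ⟨h1, h2⟩ | ⟨h1, h2⟩
        · rw [← h1, ← h2]; exact hr
        · rw [← h2, ← h1]; exact reach_symm' hr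
      · rw [Sym2.eq_iff] at hi
        rcases hi with ⟨h1, h2⟩ | ⟨h1, h2⟩ <;>
          · rw [← h1, ← h2]; exact Relation.ReflTransGen.refl
    · -- survival lemma
      have hsurv : ∀ (X : Set (E ⊕ Fin m)), X.ncard < lamStar →
          ∀ u v : V, Reach ends Z u v →
            ∃ i : Fin m, Sum.inr i ∉ X ∧ a i = s(u, v) := by
        intro X hX u v huv
        by_contra hcon
        push_neg at hcon
        set f : Fin lamStar → E ⊕ Fin m := fun k => Sum.inr (g (k, u, v)) with hf
        have hfinj : Function.Injective f := by
          intro k k' hkk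
          rw [hf] at hkk
          have h := g.injective (Sum.inr_injective hkk)
          exact congrArg Prod.fst h
        have hfa : ∀ k, a (g (k, u, v)) = s(u, v) := by
          intro k
          rw [ha]
          simp only [Equiv.symm_apply_apply]
          rw [if_pos huv]
        have hsub : Set.range f ⊆ X := by
          rintro _ ⟨k, rfl⟩
          by_contra hn
          exact hn (of_not_not fun h2 => (hcon (g (k, u, v)) h2) (hfa k))
        have hcard : (Set.range f).ncard = lamStar := by
          rw [← Set.image_univ, Set.ncard_image_of_injective _ hfinj,
            Set.ncard_univ]
          simp
        have := Set.ncard_le_ncard hsub (Set.toFinite X)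
        omega
      -- every cut in the augmented graph has size ≥ lamStar
      refine le_csInf ?_ ?_
      · refine ⟨(Set.univ : Set (E ⊕ Fin m)).ncard, Set.univ, ?_, rfl⟩
        have huniv : ∀ u v : V, Reach (Sum.elim ends a) Set.univ u v → u = v := by
          intro u v h
          induction h with
          | refl => rfl
          | tail _ hadj ih =>
            obtain ⟨ε, hεX, _⟩ := hadj
            exact absurd (Set.mem_univ ε) hεX
        rw [IsCut, Set.eq_empty_iff_forall_notMem]
        rintro w ⟨⟨u, hu, hru⟩, ⟨u', hu', hru'⟩⟩
        rw [Set.mem_singleton_iff] at hu hu'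
        rw [hu] at hru; rw [hu'] at hru'
        exact hst ((huniv _ _ hru).trans (huniv _ _ hru').symm)
      · rintro n ⟨X, hXcut, rfl⟩
        by_contra hlt
        push_neg at hlt
        set C : Set E := {e | Sum.inl e ∈ X ∧ e ∈ Z} with hC
        have htrans : ∀ u v : V, Reach ends C u v →
            Reach (Sum.elim ends a) X u v := by
          intro u v h
          induction h with
          | refl => exact Relation.ReflTransGen.refl
          | tail _ hadj ih =>
            refine ih.trans ?_
            obtain ⟨e, heC, hee⟩ := hadj
            by_cases hx : Sum.inl e ∈ X
            · have heZ : e ∉ Z := fun hz => heC ⟨hx, hz⟩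
              obtain ⟨i, hiX, hia⟩ :=
                hsurv X hlt _ _ (Relation.ReflTransGen.single ⟨e, heZ, hee⟩)
              exact Relation.ReflTransGen.single ⟨Sum.inr i, hiX, hia⟩
            · exact Relation.ReflTransGen.single ⟨Sum.inl e, hx, hee⟩
        have hCcut : IsCut ends C {s} {t} := by
          rw [IsCut, Set.eq_empty_iff_forall_notMem]
          rintro w ⟨⟨u, hu, hru⟩, ⟨u', hu', hru'⟩⟩
          rw [Set.mem_singleton_iff] at hu hu'
          rw [hu] at hru; rw [hu'] at hru'
          have hw : w ∈ RS (Sum.elim ends a) X {s} ∩ RS (Sum.elim ends a) X {t} :=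
            ⟨⟨s, rfl, htrans _ _ hru⟩, ⟨t, rfl, htrans _ _ hru'⟩⟩
          rw [hXcut] at hw
          exact hw
        have hsub : Sum.inl '' C ⊆ X := by
          rintro _ ⟨e, ⟨he, _⟩, rfl⟩
          exact he
        have hcard : C.ncard ≤ X.ncard := by
          rw [← Set.ncard_image_of_injective C Sum.inl_injective]
          exact Set.ncard_le_ncard hsub (Set.toFinite X)
        exact hno ⟨C, fun e he => he.2, hCcut, by omega⟩

end FlowAug
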